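/- Let f : {-1,1}^n → {-1,1} have i.i.d. uniform inputs and be canalizing in variable i with f̂(∅) = c. Then MI(f(X); X_i) = h((1+c)/2) − (1/2)·h(|c|). In particular this value is independent of the canalizing value a_i and canalized value b_i. -/

import Mathlib

/-- ±1 encoding of a Boolean value. -/
noncomputable def pm (b : Bool) : ℝ := if b then 1 else -1

/-- Fourier coefficient of `f` at `U` w.r.t. the uniform distribution on `{-1,1}^n`. -/
noncomputable def fhat {n : ℕ} (f : (Fin n → Bool) → Bool) (U : Finset (Fin n)) : ℝ :=
  (2 : ℝ)⁻¹ ^ n * ∑ x : Fin n → Bool, pm (f x) * ∏ i ∈ U, pm (x i)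

/-- Binary entropy in bits (with `h 0 = h 1 = 0` since `logb 2 0 = 0`). -/
noncomputable def binEnt (p : ℝ) : ℝ := -(p * Real.logb 2 p) - (1 - p) * Real.logb 2 (1 - p)

/-- Mutual information `MI(f(X); X_i)` under i.i.d. uniform inputs:
`H(f(X)) - H(f(X) | X_i)`, entropies in bits. -/
noncomputable def MI {n : ℕ} (f : (Fin n → Bool) → Bool) (i : Fin n) : ℝ :=
  binEnt ((∑ x : Fin n → Bool, if f x then (1 : ℝ) else 0) / 2 ^ n) -
    ∑ v : Bool, (1 / 2) *
      binEnt ((∑ x : Fin n → Bool, if f x ∧ x i = v then (1 : ℝ) else 0) / 2 ^ (n - 1))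

lemma binEnt_zero : binEnt 0 = 0 := by simp [binEnt]

lemma binEnt_one : binEnt 1 = 0 := by simp [binEnt]

lemma binEnt_symm (p : ℝ) : binEnt (1 - p) = binEnt p := by
  simp only [binEnt, sub_sub_cancel]; ring

/-- For `f` canalizing in variable `i` with `f̂(∅) = c`, the mutual information
equals `h((1+c)/2) - (1/2)·h(|c|)`; in particular it does not depend on the
canalizing value `a` or the canalized value `b`. -/
theorem mi_of_canalizing {n : ℕ} (f : (Fin n → Bool) → Bool) (i : Fin n) (a b : Bool)
    (hcan : ∀ x : Fin n → Bool, x i = a → f x = b) (c : ℝ) (hc : fhat f ∅ = c) :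
    MI f i = binEnt ((1 + c) / 2) - (1 / 2) * binEnt |c| := by
  obtain ⟨m, rfl⟩ : ∃ m, n = m + 1 :=
    ⟨n - 1, (Nat.succ_pred_eq_of_pos (Nat.pos_of_ne_zero fun h => (h ▸ i).elim0)).symm⟩
  set e := Equiv.funSplitAt i Bool with he
  have hi : ∀ (w : Bool) (y : {j : Fin (m+1) // j ≠ i} → Bool), e.symm (w, y) i = w := by
    intro w y; simp [he]
  have hcard : (Fintype.card ({j : Fin (m+1) // j ≠ i} → Bool)) = 2 ^ m := by
    rw [Fintype.card_fun, Fintype.card_bool, Fintype.card_subtype_compl,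
      Fintype.card_subtype_eq, Fintype.card_fin]
    rfl
  have hsum : ∀ F : (Fin (m+1) → Bool) → ℝ,
      ∑ x, F x = ∑ w : Bool, ∑ y : {j : Fin (m+1) // j ≠ i} → Bool, F (e.symm (w, y)) := by
    intro F
    rw [← e.symm.sum_comp F, Fintype.sum_prod_type]
  -- conditional counts
  have hT : ∀ v : Bool, (∑ x : Fin (m+1) → Bool, if f x ∧ x i = v then (1:ℝ) else 0)
      = ∑ y : {j : Fin (m+1) // j ≠ i} → Bool, (if f (e.symm (v, y)) then (1:ℝ) else 0) := by
    intro v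
    rw [hsum, Fintype.sum_bool]
    cases v <;> simp [hi]
  set S : ℝ := ∑ y : {j : Fin (m+1) // j ≠ i} → Bool, (if f (e.symm (!a, y)) then (1:ℝ) else 0)
    with hS
  have hSa : (∑ x : Fin (m+1) → Bool, if f x ∧ x i = a then (1:ℝ) else 0)
      = if b then (2:ℝ)^m else 0 := by
    rw [hT]
    have hfb : ∀ y, f (e.symm (a, y)) = b := fun y => hcan _ (hi a y)
    simp only [hfb]
    cases b <;> simp [Finset.card_univ, hcard]
  have hSna : (∑ x : Fin (m+1) → Bool, if f x ∧ x i = !a then (1:ℝ) else 0) = S := hT (!a)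
  have hS0 : 0 ≤ S := Finset.sum_nonneg fun y _ => by positivity
  have hS1 : S ≤ 2 ^ m := by
    have : S ≤ ∑ _y : {j : Fin (m+1) // j ≠ i} → Bool, (1:ℝ) :=
      Finset.sum_le_sum fun y _ => by split <;> norm_num
    simpa [Finset.card_univ, hcard] using this
  have hTsplit : (∑ x : Fin (m+1) → Bool, if f x then (1:ℝ) else 0)
      = (if b then (2:ℝ)^m else 0) + S := by
    rw [← hSa, ← hSna, ← Finset.sum_add_distrib]
    refine Finset.sum_congr rfl fun x _ => ?_
    cases hxa : x i <;> cases a <;> simp [hxa]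
  -- the value of c
  have hcT : c = 2 * ((if b then (2:ℝ)^m else 0) + S) / 2 ^ (m+1) - 1 := by
    rw [← hc, fhat]
    have hpm : ∀ x : Fin (m+1) → Bool,
        pm (f x) * ∏ j ∈ (∅ : Finset (Fin (m+1))), pm (x j)
          = 2 * (if f x then (1:ℝ) else 0) - 1 := by
      intro x; cases hfx : f x <;> simp [pm, hfx] <;> norm_num
    rw [Finset.sum_congr rfl fun x _ => hpm x, Finset.sum_sub_distrib, ← Finset.mul_sum,
      hTsplit]
    simp only [Finset.sum_const, Finset.card_univ, Fintype.card_fun, Fintype.card_bool,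
      Fintype.card_fin, nsmul_eq_mul, mul_one]
    have h2 : (0:ℝ) < 2 ^ (m+1) := by positivity
    push_cast
    field_simp
    rw [← mul_pow]; norm_num
  have hpow : (2:ℝ) ^ (m + 1) = 2 ^ m * 2 := by ring
  have hm0 : (0:ℝ) < 2 ^ m := by positivity
  -- first entropy term
  have hfirst : (∑ x : Fin (m+1) → Bool, if f x then (1:ℝ) else 0) / 2 ^ (m+1)
      = (1 + c) / 2 := by
    rw [hTsplit, hcT]
    field_simp
    ring
  -- now unfold MI
  rw [MI, hfirst, Fintype.sum_bool]
  have hmsub : m + 1 - 1 = m := rfl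
  rw [hmsub]
  have hkey : (1/2) * binEnt ((∑ x : Fin (m+1) → Bool, if f x ∧ x i = true then (1:ℝ) else 0) / 2 ^ m)
      + (1/2) * binEnt ((∑ x : Fin (m+1) → Bool, if f x ∧ x i = false then (1:ℝ) else 0) / 2 ^ m)
      = (1/2) * binEnt |c| := by
    have hbe : binEnt ((if b then (2:ℝ)^m else 0) / 2 ^ m) = 0 := by
      cases b <;> simp [binEnt_zero, binEnt_one, hm0.ne']
    have hbS : binEnt (S / 2 ^ m) = binEnt |c| := by
      cases hb : b
      · -- b = false : c = S/2^m - 1 ≤ 0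
        have hcval : c = S / 2 ^ m - 1 := by
          rw [hcT, hb, hpow]; field_simp; simp
        have hcle : c ≤ 0 := by
          rw [hcval]; have := (div_le_one hm0).2 hS1; linarith
        rw [abs_of_nonpos hcle, ← binEnt_symm (-c), hcval]
        ring_nf
      · -- b = true : c = S/2^m ≥ 0
        have hcval : c = S / 2 ^ m := by
          rw [hcT, hb, hpow]; field_simp; simp
        rw [abs_of_nonneg (hcval ▸ div_nonneg hS0 hm0.le), hcval]
    cases a
    · simp only [Bool.not_false] at hSna
      rw [hSa, hSna, hbe, hbS]; ring
    · simp only [Bool.not_true] at hSna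
      rw [hSa, hSna, hbe, hbS]; ring
  linarith [hkey]
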